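/- Let x = (0, n, n-1, ..., 2, 1) ∈ S_{n+1} (in one-line notation) and w_0 the longest element. Then the Bruhat interval [x, w_0] is isomorphic as a poset to the Boolean lattice of subsets of {1,...,n}. -/

import Mathlib

open Polynomial

/-- Number of inversions (the Coxeter length) of a permutation of `Fin n`. -/
def invCount {n : ℕ} (x : Equiv.Perm (Fin n)) : ℕ :=
  (Finset.univ.filter (fun p : Fin n × Fin n => p.1 < p.2 ∧ x p.2 < x p.1)).card

/-- Bruhat order on the symmetric group `S_n = Perm (Fin n)`: `x ≤ y` iff there is an
upward path from `x` to `y` in the Bruhat graph (edges: multiplication by a transposition,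
oriented by increasing length). -/
def BruhatLE {n : ℕ} (x y : Equiv.Perm (Fin n)) : Prop :=
  Relation.ReflTransGen
    (fun u v => (∃ i j : Fin n, i ≠ j ∧ v = Equiv.swap i j * u) ∧ invCount u < invCount v)
    x y

def BruhatLT {n : ℕ} (x y : Equiv.Perm (Fin n)) : Prop :=
  BruhatLE x y ∧ x ≠ y


namespace BIAux

open Equiv Finset


variable {N : ℕ}

def invSet (w : Perm (Fin N)) : Finset (Fin N × Fin N) :=
  Finset.univ.filter (fun p : Fin N × Fin N => p.1 < p.2 ∧ w p.2 < w p.1)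

lemma invCount_eq (w : Perm (Fin N)) : invCount w = (invSet w).card := rfl

lemma mem_invSet {w : Perm (Fin N)} {r : Fin N × Fin N} :
    r ∈ invSet w ↔ r.1 < r.2 ∧ w r.2 < w r.1 := by
  simp [invSet]

def Fmap (p q : Fin N) (r : Fin N × Fin N) : Fin N × Fin N :=
  if ((r.1 = p ∨ r.1 = q) ↔ (r.2 = p ∨ r.2 = q)) ∨ ((p < r.1 ∧ r.1 < q) ∨ (p < r.2 ∧ r.2 < q))
  then r else (Equiv.swap p q r.1, Equiv.swap p q r.2)

lemma swap_mem_iff (p q a : Fin N) : (swap p q a = p ∨ swap p q a = q) ↔ (a = p ∨ a = q) := by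
  constructor
  · intro h
    rcases h with h | h <;> rw [swap_apply_eq_iff] at h
    · rcases eq_or_ne p q with rfl | hpq
      · simp at h; exact Or.inl h
      · rw [swap_apply_left] at h; exact Or.inr h
    · rcases eq_or_ne p q with rfl | hpq
      · simp at h; exact Or.inl h
      · rw [swap_apply_right] at h; exact Or.inl h
  · intro h
    rcases h with rfl | rfl
    · rw [swap_apply_left]; exact Or.inr rfl
    · rw [swap_apply_right]; exact Or.inl rfl

lemma Fmap_invol (p q : Fin N) (r : Fin N × Fin N) : Fmap p q (Fmap p q r) = r := by
  by_cases h : ((r.1 = p ∨ r.1 = q) ↔ (r.2 = p ∨ r.2 = q)) ∨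
      ((p < r.1 ∧ r.1 < q) ∨ (p < r.2 ∧ r.2 < q))
  · have hF : Fmap p q r = r := by rw [Fmap, if_pos h]
    rw [hF, hF]
  · have hF : Fmap p q r = (Equiv.swap p q r.1, Equiv.swap p q r.2) := by
      rw [Fmap, if_neg h]
    have h1 : ¬(((r.1 = p ∨ r.1 = q)) ↔ ((r.2 = p ∨ r.2 = q))) := fun hh => h (Or.inl hh)
    have h2 : ¬(p < r.1 ∧ r.1 < q) := fun hh => h (Or.inr (Or.inl hh))
    have h3 : ¬(p < r.2 ∧ r.2 < q) := fun hh => h (Or.inr (Or.inr hh))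
    have key : ∀ a : Fin N, ¬(p < a ∧ a < q) → ¬(p < swap p q a ∧ swap p q a < q) := by
      intro a ha
      by_cases hap : a = p
      · subst hap; rw [swap_apply_left]; simp
      by_cases haq : a = q
      · subst haq; rw [swap_apply_right]; simp
      · rw [swap_apply_of_ne_of_ne hap haq]; exact ha
    rw [hF, Fmap, if_neg]
    · simp [swap_apply_self]
    · rintro (hh | hh | hh)
      · rw [swap_mem_iff, swap_mem_iff] at hh
        exact h1 hh
      · exact key r.1 h2 hh
      · exact key r.2 h3 hh

lemma invCount_lt_mul_swap (w : Perm (Fin N)) {p q : Fin N}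
    (hpq : p < q) (hw : w p < w q) :
    invCount w < invCount (w * Equiv.swap p q) := by
  set v := w * Equiv.swap p q with hv
  have hvp : v p = w q := by simp [hv, Equiv.Perm.mul_apply]
  have hvq : v q = w p := by simp [hv, Equiv.Perm.mul_apply]
  have hvother : ∀ a : Fin N, a ≠ p → a ≠ q → v a = w a := by
    intro a h1 h2
    simp [hv, Equiv.Perm.mul_apply, swap_apply_of_ne_of_ne h1 h2]
  have hne : p ≠ q := ne_of_lt hpq
  have hmaps : ∀ r ∈ invSet w, Fmap p q r ∈ (invSet v).erase (p, q) := by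
    rintro ⟨i, j⟩ hr
    rw [mem_invSet] at hr
    obtain ⟨hij, hwji⟩ := hr
    simp only at hij hwji
    by_cases hip : i = p
    · subst hip
      by_cases hjq : j = q
      · subst hjq; exact absurd hwji (not_lt.mpr (le_of_lt hw))
      have hjp : j ≠ i := ne_of_gt hij
      by_cases hbet : j < q
      · -- i = p, p < j < q : identity branch
        have hF : Fmap i q (i, j) = (i, j) := by
          rw [Fmap, if_pos (Or.inr (Or.inr ⟨hij, hbet⟩))]
        rw [hF, Finset.mem_erase, mem_invSet]
        refine ⟨by simp [hjq], hij, ?_⟩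
        rw [hvp, hvother j hjp hjq]
        exact lt_trans hwji hw
      · -- i = p, j > q : swap branch, maps to (q, j)
        have hjq2 : q < j := lt_of_le_of_ne (le_of_not_gt hbet) (Ne.symm hjq)
        have hF : Fmap i q (i, j) = (q, j) := by
          rw [Fmap, if_neg, swap_apply_left, swap_apply_of_ne_of_ne hjp hjq]
          rintro (hh | ⟨h1, _⟩ | ⟨_, h2⟩)
          · rcases hh.mp (Or.inl rfl) with h' | h'
            · exact hjp h'
            · exact hjq h'
          · exact absurd h1 (lt_irrefl i)
          · exact absurd hjq2 (not_lt.mpr (le_of_lt h2))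
        rw [hF, Finset.mem_erase, mem_invSet]
        refine ⟨by simp [hne.symm], hjq2, ?_⟩
        rw [hvq, hvother j hjp hjq]
        exact hwji
    by_cases hiq : i = q
    · -- i = q : then j > q, swap branch, maps to (p, j)
      subst hiq
      have hji : j ≠ i := ne_of_gt hij
      have hjp : j ≠ p := fun h => absurd (h ▸ hij) (not_lt.mpr (le_of_lt hpq))
      have hF : Fmap p i (i, j) = (p, j) := by
        rw [Fmap, if_neg, swap_apply_right, swap_apply_of_ne_of_ne hjp hji]
        rintro (hh | ⟨h1, h2⟩ | ⟨h1, h2⟩)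
        · rcases hh.mp (Or.inr rfl) with h' | h'
          · exact hjp h'
          · exact hji h'
        · exact absurd h2 (lt_irrefl i)
        · exact absurd (lt_trans hij h2) (lt_irrefl i)
      rw [hF, Finset.mem_erase, mem_invSet]
      refine ⟨by simp [hji], lt_trans hpq hij, ?_⟩
      rw [hvp, hvother j hjp hji]
      exact hwji
    by_cases hjp : j = p
    · -- j = p, i < p : swap branch, maps to (i, q)
      subst hjp
      have hiq2 : i ≠ q := fun h => absurd (h ▸ hij) (not_lt.mpr (le_of_lt hpq))
      have hF : Fmap j q (i, j) = (i, q) := by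
        rw [Fmap, if_neg, swap_apply_left, swap_apply_of_ne_of_ne hip hiq2]
        rintro (hh | ⟨h1, h2⟩ | ⟨h1, h2⟩)
        · rcases hh.mpr (Or.inl rfl) with h' | h'
          · exact hip h'
          · exact hiq2 h'
        · exact absurd (lt_trans h1 hij) (lt_irrefl j)
        · exact absurd h1 (lt_irrefl j)
      rw [hF, Finset.mem_erase, mem_invSet]
      refine ⟨by simp [hip], lt_trans hij hpq, ?_⟩
      rw [hvq, hvother i hip hiq2]
      exact hwji
    by_cases hjq : j = q
    · subst hjq
      by_cases hbet : p < i
      · -- p < i < j = q : identity branch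
        have hF : Fmap p j (i, j) = (i, j) := by
          rw [Fmap, if_pos (Or.inr (Or.inl ⟨hbet, hij⟩))]
        rw [hF, Finset.mem_erase, mem_invSet]
        refine ⟨by simp [hip], hij, ?_⟩
        rw [hvq, hvother i hip hiq]
        exact lt_trans hw hwji
      · -- i < p, j = q : swap branch, maps to (i, p)
        have hip2 : i < p := lt_of_le_of_ne (le_of_not_gt hbet) hip
        have hF : Fmap p j (i, j) = (i, p) := by
          rw [Fmap, if_neg, swap_apply_right, swap_apply_of_ne_of_ne hip hiq]
          rintro (hh | ⟨h1, h2⟩ | ⟨h1, h2⟩)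
          · rcases hh.mpr (Or.inr rfl) with h' | h'
            · exact hip h'
            · exact hiq h'
          · exact absurd h1 hbet
          · exact absurd h2 (lt_irrefl j)
        rw [hF, Finset.mem_erase, mem_invSet]
        refine ⟨by simp [hip], hip2, ?_⟩
        rw [hvp, hvother i hip hiq]
        exact hwji
    · -- none of i, j in {p, q} : identity branch
      have hF : Fmap p q (i, j) = (i, j) := by
        rw [Fmap, if_pos (Or.inl (by simp [hip, hiq, hjp, hjq]))]
      rw [hF, Finset.mem_erase, mem_invSet]
      refine ⟨by simp [hip], hij, ?_⟩
      rw [hvother i hip hiq, hvother j hjp hjq]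
      exact hwji
  have hinj : Set.InjOn (Fmap p q) (invSet w) := by
    intro a _ b _ hab
    have := congrArg (Fmap p q) hab
    rwa [Fmap_invol, Fmap_invol] at this
  have hcard : (invSet w).card ≤ ((invSet v).erase (p, q)).card :=
    Finset.card_le_card_of_injOn _ hmaps hinj
  have hpq_mem : (p, q) ∈ invSet v := by
    rw [mem_invSet]
    exact ⟨hpq, by rw [hvp, hvq]; exact hw⟩
  have h1 : 0 < (invSet v).card := Finset.card_pos.mpr ⟨_, hpq_mem⟩
  rw [invCount_eq, invCount_eq]
  have := Finset.card_erase_of_mem hpq_mem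
  omega



variable {N : ℕ}

def nxt (T : Finset (Fin (N + 1))) (i : Fin (N + 1)) : Fin (N + 1) :=
  if h : (T.filter (fun j => i < j)).Nonempty then (T.filter (fun j => i < j)).min' h else 0

def prv (T : Finset (Fin (N + 1))) (h0 : (0 : Fin (N + 1)) ∈ T) (i : Fin (N + 1)) : Fin (N + 1) :=
  if h : (T.filter (fun j => j < i)).Nonempty then (T.filter (fun j => j < i)).max' h
  else T.max' ⟨0, h0⟩

lemma nxt_mem {T : Finset (Fin (N + 1))} (h0 : (0 : Fin (N + 1)) ∈ T) (i : Fin (N + 1)) :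
    nxt T i ∈ T := by
  rw [nxt]
  split
  · next h => exact (Finset.mem_filter.mp ((T.filter _).min'_mem h)).1
  · exact h0

lemma prv_mem {T : Finset (Fin (N + 1))} (h0 : (0 : Fin (N + 1)) ∈ T) (i : Fin (N + 1)) :
    prv T h0 i ∈ T := by
  rw [prv]
  split
  · next h => exact (Finset.mem_filter.mp ((T.filter _).max'_mem h)).1
  · exact T.max'_mem _

lemma lt_nxt_of_nonempty {T : Finset (Fin (N + 1))} {i : Fin (N + 1)}
    (h : (T.filter (fun j => i < j)).Nonempty) : i < nxt T i := by
  rw [nxt, dif_pos h]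
  exact (Finset.mem_filter.mp ((T.filter _).min'_mem h)).2

lemma nxt_eq_zero_of_empty {T : Finset (Fin (N + 1))} {i : Fin (N + 1)}
    (h : ¬ (T.filter (fun j => i < j)).Nonempty) : nxt T i = 0 := dif_neg h

lemma max_above_empty {T : Finset (Fin (N + 1))} (hne : T.Nonempty) :
    ¬ (T.filter (fun j => T.max' hne < j)).Nonempty := by
  rw [Finset.filter_eq_empty_iff.mpr (fun j hj => not_lt.mpr (Finset.le_max' T j hj))]
  exact Finset.not_nonempty_empty

lemma below_zero_empty {T : Finset (Fin (N + 1))} :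
    ¬ (T.filter (fun j => j < (0 : Fin (N + 1)))).Nonempty := by
  rw [Finset.filter_eq_empty_iff.mpr (fun j _ => not_lt.mpr (Fin.zero_le j))]
  exact Finset.not_nonempty_empty

lemma nxt_le {T : Finset (Fin (N + 1))} {i j : Fin (N + 1)} (hj : j ∈ T) (hij : i < j) :
    nxt T i ≤ j := by
  have hm : j ∈ T.filter (fun k => i < k) := Finset.mem_filter.mpr ⟨hj, hij⟩
  rw [nxt, dif_pos ⟨j, hm⟩]
  exact Finset.min'_le _ _ hm

lemma le_prv {T : Finset (Fin (N + 1))} (h0 : (0 : Fin (N + 1)) ∈ T) {i j : Fin (N + 1)}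
    (hj : j ∈ T) (hji : j < i) : j ≤ prv T h0 i := by
  have hm : j ∈ T.filter (fun k => k < i) := Finset.mem_filter.mpr ⟨hj, hji⟩
  rw [prv, dif_pos ⟨j, hm⟩]
  exact Finset.le_max' _ _ hm

lemma prv_nxt {T : Finset (Fin (N + 1))} (h0 : (0 : Fin (N + 1)) ∈ T) {i : Fin (N + 1)}
    (hi : i ∈ T) : prv T h0 (nxt T i) = i := by
  by_cases h : (T.filter (fun j => i < j)).Nonempty
  · have him : i < nxt T i := lt_nxt_of_nonempty h
    have hne : (T.filter (fun j => j < nxt T i)).Nonempty :=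
      ⟨i, Finset.mem_filter.mpr ⟨hi, him⟩⟩
    rw [prv, dif_pos hne]
    apply le_antisymm
    · by_contra hcon
      push_neg at hcon
      have hmem := (T.filter (fun j => j < nxt T i)).max'_mem hne
      rw [Finset.mem_filter] at hmem
      exact absurd hmem.2 (not_lt.mpr (nxt_le hmem.1 hcon))
    · exact Finset.le_max' (T.filter (fun j => j < nxt T i)) i (Finset.mem_filter.mpr ⟨hi, him⟩)
  · rw [nxt, dif_neg h, prv, dif_neg below_zero_empty]
    apply le_antisymm
    · by_contra hcon
      push_neg at hcon
      exact h ⟨T.max' ⟨0, h0⟩, Finset.mem_filter.mpr ⟨T.max'_mem _, hcon⟩⟩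
    · exact Finset.le_max' _ _ hi

lemma nxt_prv {T : Finset (Fin (N + 1))} (h0 : (0 : Fin (N + 1)) ∈ T) {i : Fin (N + 1)}
    (hi : i ∈ T) : nxt T (prv T h0 i) = i := by
  by_cases h : (T.filter (fun j => j < i)).Nonempty
  · have hMlt : prv T h0 i < i := by
      rw [prv, dif_pos h]
      exact (Finset.mem_filter.mp ((T.filter _).max'_mem h)).2
    have hne : (T.filter (fun j => prv T h0 i < j)).Nonempty :=
      ⟨i, Finset.mem_filter.mpr ⟨hi, hMlt⟩⟩
    rw [nxt, dif_pos hne]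
    apply le_antisymm
    · exact Finset.min'_le _ _ (Finset.mem_filter.mpr ⟨hi, hMlt⟩)
    · by_contra hcon
      push_neg at hcon
      have hmem := (T.filter (fun j => prv T h0 i < j)).min'_mem hne
      rw [Finset.mem_filter] at hmem
      exact absurd hmem.2 (not_lt.mpr (le_prv h0 hmem.1 hcon))
  · have hi0 : i = 0 := by
      by_contra hne
      exact h ⟨0, Finset.mem_filter.mpr ⟨h0, Fin.pos_iff_ne_zero.mpr hne⟩⟩
    subst hi0
    rw [prv, dif_neg h, nxt]
    exact dif_neg (max_above_empty _)

def cyc (T : Finset (Fin (N + 1))) (h0 : (0 : Fin (N + 1)) ∈ T) : Perm (Fin (N + 1)) where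
  toFun i := if i ∈ T then nxt T i else i
  invFun i := if i ∈ T then prv T h0 i else i
  left_inv i := by
    by_cases hi : i ∈ T
    · simp only [hi, if_pos, if_pos (nxt_mem h0 i : nxt T i ∈ T)]
      exact prv_nxt h0 hi
    · simp only [hi, if_neg, if_false]
  right_inv i := by
    by_cases hi : i ∈ T
    · simp only [hi, if_pos, if_pos (prv_mem h0 i : prv T h0 i ∈ T)]
      exact nxt_prv h0 hi
    · simp only [hi, if_neg, if_false]

lemma cyc_apply_mem {T : Finset (Fin (N + 1))} (h0 : (0 : Fin (N + 1)) ∈ T) {i : Fin (N + 1)}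
    (hi : i ∈ T) : cyc T h0 i = nxt T i := by
  simp [cyc, hi]

lemma cyc_apply_not_mem {T : Finset (Fin (N + 1))} (h0 : (0 : Fin (N + 1)) ∈ T) {i : Fin (N + 1)}
    (hi : i ∉ T) : cyc T h0 i = i := by
  simp [cyc, hi]



variable {n : ℕ}

def brel (u v : Perm (Fin (n + 1))) : Prop :=
  (∃ i j : Fin (n + 1), i ≠ j ∧ v = Equiv.swap i j * u) ∧ invCount u < invCount v

lemma bruhatLE_eq (x y : Perm (Fin (n + 1))) :
    BruhatLE x y = Relation.ReflTransGen brel x y := rfl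

lemma brel_of_swap (u : Perm (Fin (n + 1))) {p q : Fin (n + 1)}
    (hpq : p < q) (hval : u p < u q) : brel u (u * Equiv.swap p q) := by
  constructor
  · refine ⟨u p, u q, fun h => absurd (u.injective h) (ne_of_lt hpq), ?_⟩
    rw [Equiv.mul_swap_eq_swap_mul]
  · exact invCount_lt_mul_swap u hpq hval

lemma step_normal {u v : Perm (Fin (n + 1))} (h : brel u v) :
    ∃ p q : Fin (n + 1), p < q ∧ u p < u q ∧ v = u * Equiv.swap p q := by
  obtain ⟨⟨a, b, hab, rfl⟩, hinv⟩ := h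
  have hrw : Equiv.swap a b * u = u * Equiv.swap (u⁻¹ a) (u⁻¹ b) :=
    Equiv.swap_mul_eq_mul_swap u a b
  have hne : u⁻¹ a ≠ u⁻¹ b := fun h => hab (by
    have := congrArg u h
    simpa using this)
  -- normalize order
  rcases lt_or_gt_of_ne hne with hlt | hgt
  · refine ⟨u⁻¹ a, u⁻¹ b, hlt, ?_, hrw⟩
    rcases lt_trichotomy (u (u⁻¹ a)) (u (u⁻¹ b)) with h' | h' | h'
    · exact h'
    · exact absurd (u.injective h') (ne_of_lt hlt)
    · -- would decrease invCount: contradiction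
      exfalso
      set w := Equiv.swap a b * u with hw
      have hwp : w (u⁻¹ a) = u (u⁻¹ b) := by
        rw [hrw, Equiv.Perm.mul_apply, Equiv.swap_apply_left]
      have hwq : w (u⁻¹ b) = u (u⁻¹ a) := by
        rw [hrw, Equiv.Perm.mul_apply, Equiv.swap_apply_right]
      have hless : w (u⁻¹ a) < w (u⁻¹ b) := by rw [hwp, hwq]; exact h'
      have := invCount_lt_mul_swap w hlt hless
      have hback : w * Equiv.swap (u⁻¹ a) (u⁻¹ b) = u := by
        rw [hrw, mul_assoc, Equiv.swap_mul_self, mul_one]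
      rw [hback] at this
      omega
  · have hrw2 : Equiv.swap a b * u = u * Equiv.swap (u⁻¹ b) (u⁻¹ a) := by
      rw [hrw, Equiv.swap_comm]
    refine ⟨u⁻¹ b, u⁻¹ a, hgt, ?_, hrw2⟩
    rcases lt_trichotomy (u (u⁻¹ b)) (u (u⁻¹ a)) with h' | h' | h'
    · exact h'
    · exact absurd (u.injective h') (ne_of_lt hgt)
    · exfalso
      set w := Equiv.swap a b * u with hw
      have hwp : w (u⁻¹ b) = u (u⁻¹ a) := by
        rw [hrw2, Equiv.Perm.mul_apply, Equiv.swap_apply_left]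
      have hwq : w (u⁻¹ a) = u (u⁻¹ b) := by
        rw [hrw2, Equiv.Perm.mul_apply, Equiv.swap_apply_right]
      have hless : w (u⁻¹ b) < w (u⁻¹ a) := by rw [hwp, hwq]; exact h'
      have := invCount_lt_mul_swap w hgt hless
      have hback : w * Equiv.swap (u⁻¹ b) (u⁻¹ a) = u := by
        rw [hrw2, mul_assoc, Equiv.swap_mul_self, mul_one]
      rw [hback] at this
      omega

lemma negval {i : Fin (n + 1)} (hi : i ≠ 0) : ((-i : Fin (n + 1)) : ℕ) = n + 1 - (i : ℕ) := by
  rw [Fin.coe_neg]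
  have h1 : 0 < (i : ℕ) := by
    have := Fin.pos_iff_ne_zero.mpr hi
    exact this
  have h2 : (i : ℕ) < n + 1 := i.isLt
  exact Nat.mod_eq_of_lt (by omega)

lemma neg_inj' {i j : Fin (n + 1)} (h : -i = -j) : i = j := by
  have := congrArg Neg.neg h
  rwa [neg_neg, neg_neg] at this

def Qz (z : Perm (Fin (n + 1))) : Prop :=
  ∀ i : Fin (n + 1), i ≠ 0 → (z i : ℕ) + (i : ℕ) ≤ n + 1

lemma step_preserve {u v : Perm (Fin (n + 1))} (h : brel u v) (hQ : Qz u) :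
    Qz v ∧ ∀ i : Fin (n + 1), i ≠ 0 → u i ≠ -i → v i ≠ -i := by
  obtain ⟨p, q, hpq, hval, rfl⟩ := step_normal h
  have hq0 : q ≠ 0 := by
    intro h0
    rw [h0] at hpq
    exact absurd hpq (Fin.not_lt_zero p)
  have hq0v : (q : ℕ) ≠ 0 := fun hh => hq0 (Fin.ext (by simpa using hh))
  have happ : ∀ a, (u * Equiv.swap p q) a = u (Equiv.swap p q a) := fun a => rfl
  have hvp : (u * Equiv.swap p q) p = u q := by rw [happ, Equiv.swap_apply_left]
  have hvq : (u * Equiv.swap p q) q = u p := by rw [happ, Equiv.swap_apply_right]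
  have hvo : ∀ a, a ≠ p → a ≠ q → (u * Equiv.swap p q) a = u a := fun a h1 h2 => by
    rw [happ, Equiv.swap_apply_of_ne_of_ne h1 h2]
  have hpqv : (p : ℕ) < (q : ℕ) := hpq
  have hvalv : (u p : ℕ) < (u q : ℕ) := hval
  have hQq := hQ q hq0
  constructor
  · intro i hi
    by_cases hip : i = p
    · rw [hip, hvp]
      have : (p : ℕ) < (q : ℕ) := hpqv
      omega
    by_cases hiq : i = q
    · rw [hiq, hvq]
      omega
    · rw [hvo i hip hiq]
      exact hQ i hi
  · intro i hi hne heq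
    apply hne
    by_cases hip : i = p
    · exfalso
      rw [hip, hvp] at heq
      have hp0 : p ≠ 0 := hip ▸ hi
      have hp0v : (p : ℕ) ≠ 0 := fun hh => hp0 (Fin.ext (by simpa using hh))
      have e1 : (u q : ℕ) = ((-p : Fin (n + 1)) : ℕ) := congrArg Fin.val heq
      rw [negval hp0] at e1
      omega
    by_cases hiq : i = q
    · exfalso
      rw [hiq, hvq] at heq
      have e1 : (u p : ℕ) = ((-q : Fin (n + 1)) : ℕ) := congrArg Fin.val heq
      rw [negval hq0] at e1
      omega
    · rw [hvo i hip hiq] at heq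
      exact heq

lemma bruhat_preserve {u z : Perm (Fin (n + 1))} (h : BruhatLE u z) (hQ : Qz u) :
    Qz z ∧ ∀ i : Fin (n + 1), i ≠ 0 → u i ≠ -i → z i ≠ -i := by
  rw [bruhatLE_eq] at h
  induction h with
  | refl => exact ⟨hQ, fun _ _ h => h⟩
  | tail _ hstep ih =>
      obtain ⟨ihQ, ihA⟩ := ih
      obtain ⟨hQ', hA'⟩ := step_preserve hstep ihQ
      exact ⟨hQ', fun i hi hne => hA' i hi (ihA i hi hne)⟩


-- ### The family z_A
def TA (A : Finset (Fin n)) : Finset (Fin (n + 1)) := insert 0 (A.map (Fin.succEmb n))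

lemma zero_mem_TA (A : Finset (Fin n)) : (0 : Fin (n + 1)) ∈ TA A :=
  Finset.mem_insert_self _ _

lemma succ_mem_TA {A : Finset (Fin n)} {a : Fin n} : a.succ ∈ TA A ↔ a ∈ A := by
  simp [TA, Fin.succ_ne_zero]

lemma mem_TA_ne_zero {A : Finset (Fin n)} {i : Fin (n + 1)} (hi : i ≠ 0) :
    i ∈ TA A ↔ i.pred hi ∈ A := by
  conv_lhs => rw [← Fin.succ_pred i hi]
  exact succ_mem_TA

def zf (A : Finset (Fin n)) : Perm (Fin (n + 1)) :=
  Equiv.neg (Fin (n + 1)) * cyc (TA A) (zero_mem_TA A)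

lemma zf_apply (A : Finset (Fin n)) (i : Fin (n + 1)) :
    zf A i = -(cyc (TA A) (zero_mem_TA A) i) := rfl

lemma zf_apply_not_mem {A : Finset (Fin n)} {i : Fin (n + 1)} (hi : i ∉ TA A) :
    zf A i = -i := by
  rw [zf_apply, cyc_apply_not_mem _ hi]

lemma zf_apply_mem {A : Finset (Fin n)} {i : Fin (n + 1)} (hi : i ∈ TA A) :
    zf A i = -(nxt (TA A) i) := by
  rw [zf_apply, cyc_apply_mem _ hi]

lemma Qz_zf (A : Finset (Fin n)) : Qz (zf A) := by
  intro i hi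
  have hiv : 1 ≤ (i : ℕ) := by
    have : i ≠ 0 := hi
    have := Fin.pos_iff_ne_zero.mpr hi
    exact this
  by_cases hmem : i ∈ TA A
  · rw [zf_apply_mem hmem]
    by_cases h : ((TA A).filter (fun j => i < j)).Nonempty
    · have hlt : i < nxt (TA A) i := lt_nxt_of_nonempty h
      have hlt' : (i : ℕ) < (nxt (TA A) i : ℕ) := hlt
      have hn0 : nxt (TA A) i ≠ 0 := by
        intro hh
        rw [hh] at hlt
        exact absurd hlt (Fin.not_lt_zero i)
      rw [negval hn0]
      omega
    · rw [nxt_eq_zero_of_empty h]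
      have : ((-0 : Fin (n + 1)) : ℕ) = 0 := by norm_num
      rw [this]
      have := i.isLt
      omega
  · rw [zf_apply_not_mem hmem, negval hi]
    have := i.isLt
    omega

def Aof (z : Perm (Fin (n + 1))) : Finset (Fin n) :=
  Finset.univ.filter (fun a : Fin n => z a.succ ≠ -(a.succ))

lemma mem_Aof {z : Perm (Fin (n + 1))} {a : Fin n} :
    a ∈ Aof z ↔ z a.succ ≠ -(a.succ) := by simp [Aof]

lemma zf_succ_ne_iff {A : Finset (Fin n)} {a : Fin n} :
    zf A a.succ ≠ -(a.succ) ↔ a ∈ A := by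
  constructor
  · intro h
    by_contra hA
    have : a.succ ∉ TA A := fun hh => hA (succ_mem_TA.mp hh)
    exact h (zf_apply_not_mem this)
  · intro hA h
    have hmem : a.succ ∈ TA A := succ_mem_TA.mpr hA
    rw [zf_apply_mem hmem] at h
    have := neg_inj' h
    by_cases hne : ((TA A).filter (fun j => a.succ < j)).Nonempty
    · exact absurd this.symm (ne_of_lt (lt_nxt_of_nonempty hne))
    · rw [nxt_eq_zero_of_empty hne] at this
      exact (Fin.succ_ne_zero a) this.symm

lemma Aof_zf (A : Finset (Fin n)) : Aof (zf A) = A := by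
  ext a
  rw [mem_Aof, zf_succ_ne_iff]

-- ### classification of permutations satisfying Qz
lemma neg_z_mem {z : Perm (Fin (n + 1))} {T : Finset (Fin (n + 1))} (h0 : (0 : Fin (n+1)) ∈ T)
    (hout : ∀ j : Fin (n + 1), j ≠ 0 → j ∉ T → z j = -j) {t : Fin (n + 1)} (ht : t ∈ T) :
    -(z t) ∈ T := by
  by_contra hcon
  have hj0 : -(z t) ≠ 0 := fun hh => hcon (hh ▸ h0)
  have h1 := hout _ hj0 hcon
  rw [neg_neg] at h1
  have h2 := z.injective h1
  rw [h2] at hcon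
  exact hcon ht

lemma dichotomy {z : Perm (Fin (n + 1))} {T : Finset (Fin (n + 1))}
    (hbound : ∀ j : Fin (n + 1), j ≠ 0 → j ∈ T → (z j : ℕ) + (j : ℕ) ≤ n + 1 ∧ z j ≠ -j)
    {t : Fin (n + 1)} (ht : t ∈ T) : z t = 0 ∨ t < -(z t) := by
  by_cases hz : z t = 0
  · exact Or.inl hz
  right
  by_cases ht0 : t = 0
  · subst ht0
    have : -(z 0) ≠ 0 := fun hh => hz (by
      have := congrArg Neg.neg hh
      rwa [neg_neg, neg_zero] at this)
    exact Fin.pos_iff_ne_zero.mpr this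
  · obtain ⟨hb, hne⟩ := hbound t ht0 ht
    have h1 : ((-(z t) : Fin (n + 1)) : ℕ) = n + 1 - (z t : ℕ) := negval hz
    have h2 : (z t : ℕ) ≠ n + 1 - (t : ℕ) := by
      intro hh
      apply hne
      apply Fin.ext
      rw [hh, negval ht0]
    have h3 : 1 ≤ (t : ℕ) := by
      have := Fin.pos_iff_ne_zero.mpr ht0
      exact this
    have h4 : 1 ≤ (z t : ℕ) := by
      have := Fin.pos_iff_ne_zero.mpr hz
      exact this
    rw [Fin.lt_def, h1]
    omega

lemma forcing {z : Perm (Fin (n + 1))} {T : Finset (Fin (n + 1))} (h0 : (0 : Fin (n+1)) ∈ T)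
    (hout : ∀ j : Fin (n + 1), j ≠ 0 → j ∉ T → z j = -j)
    (hbound : ∀ j : Fin (n + 1), j ≠ 0 → j ∈ T → (z j : ℕ) + (j : ℕ) ≤ n + 1 ∧ z j ≠ -j) :
    ∀ t ∈ T, z t = -(nxt T t) := by
  suffices h : ∀ k : ℕ, ∀ t ∈ T, n - (t : ℕ) ≤ k → z t = -(nxt T t) by
    intro t ht
    exact h n t ht (Nat.sub_le _ _)
  intro k
  induction k with
  | zero =>
      intro t ht hk
      have hemp : ¬ (T.filter (fun j => t < j)).Nonempty := by
        rintro ⟨j, hj⟩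
        rw [Finset.mem_filter] at hj
        have h1 : (t : ℕ) < (j : ℕ) := hj.2
        have := j.isLt
        omega
      rw [nxt_eq_zero_of_empty hemp]
      rcases dichotomy hbound ht with h | h
      · rw [h, neg_zero]
      · exact absurd ⟨-(z t), Finset.mem_filter.mpr ⟨neg_z_mem h0 hout ht, h⟩⟩ hemp
  | succ k ih =>
      intro t ht hk
      by_cases hemp : (T.filter (fun j => t < j)).Nonempty
      · have hm_lt : t < nxt T t := lt_nxt_of_nonempty hemp
        rcases dichotomy hbound ht with h | h
        · exfalso
          have hMT : T.max' ⟨0, h0⟩ ∈ T := T.max'_mem _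
          have htM : t < T.max' ⟨0, h0⟩ :=
            lt_of_lt_of_le hm_lt (Finset.le_max' _ _ (nxt_mem h0 t))
          have htMv : (t : ℕ) < ((T.max' ⟨0, h0⟩ : Fin (n + 1)) : ℕ) := htM
          have hzM : z (T.max' ⟨0, h0⟩) = -(nxt T (T.max' ⟨0, h0⟩)) :=
            ih _ hMT (by omega)
          have hnx : nxt T (T.max' ⟨0, h0⟩) = 0 := nxt_eq_zero_of_empty (max_above_empty _)
          rw [hnx, neg_zero] at hzM
          have heq : z (T.max' ⟨0, h0⟩) = z t := by rw [hzM, h]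
          have := z.injective heq
          rw [this] at htM
          exact absurd htM (lt_irrefl t)
        · have hgT : -(z t) ∈ T := neg_z_mem h0 hout ht
          have hge : nxt T t ≤ -(z t) := nxt_le hgT h
          rcases eq_or_lt_of_le hge with heq | hlt
          · rw [heq, neg_neg]
          · exfalso
            have hsT : prv T h0 (-(z t)) ∈ T := prv_mem h0 _
            have hs_ge : nxt T t ≤ prv T h0 (-(z t)) := le_prv h0 (nxt_mem h0 t) hlt
            have hs_gt_t : t < prv T h0 (-(z t)) := lt_of_lt_of_le hm_lt hs_ge
            have hs_gt_tv : (t : ℕ) < ((prv T h0 (-(z t))) : ℕ) := hs_gt_t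
            have hnxts : nxt T (prv T h0 (-(z t))) = -(z t) := nxt_prv h0 hgT
            have hzs : z (prv T h0 (-(z t))) = -(nxt T (prv T h0 (-(z t)))) :=
              ih _ hsT (by omega)
            rw [hnxts, neg_neg] at hzs
            have := z.injective hzs
            rw [this] at hs_gt_t
            exact absurd hs_gt_t (lt_irrefl t)
      · rw [nxt_eq_zero_of_empty hemp]
        rcases dichotomy hbound ht with h | h
        · rw [h, neg_zero]
        · exact absurd ⟨-(z t), Finset.mem_filter.mpr ⟨neg_z_mem h0 hout ht, h⟩⟩ hemp

lemma class_eq {z : Perm (Fin (n + 1))} (hQ : Qz z) : zf (Aof z) = z := by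
  have hout : ∀ j : Fin (n + 1), j ≠ 0 → j ∉ TA (Aof z) → z j = -j := by
    intro j hj hmem
    rw [mem_TA_ne_zero hj, mem_Aof] at hmem
    push_neg at hmem
    rwa [Fin.succ_pred] at hmem
  have hbound : ∀ j : Fin (n + 1), j ≠ 0 → j ∈ TA (Aof z) →
      (z j : ℕ) + (j : ℕ) ≤ n + 1 ∧ z j ≠ -j := by
    intro j hj hmem
    refine ⟨hQ j hj, ?_⟩
    rw [mem_TA_ne_zero hj, mem_Aof] at hmem
    rwa [Fin.succ_pred] at hmem
  apply Equiv.ext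
  intro i
  by_cases hmem : i ∈ TA (Aof z)
  · rw [zf_apply_mem hmem]
    exact (forcing (zero_mem_TA _) hout hbound i hmem).symm
  · have hi : i ≠ 0 := fun hh => hmem (hh ▸ zero_mem_TA _)
    rw [zf_apply_not_mem hmem]
    exact (hout i hi hmem).symm

-- ### inserting one element: a Bruhat cover step
lemma prv_lt_of_nonempty {T : Finset (Fin (n + 1))} (h0 : (0 : Fin (n+1)) ∈ T)
    {i : Fin (n + 1)} (h : (T.filter (fun j => j < i)).Nonempty) : prv T h0 i < i := by
  rw [prv, dif_pos h]
  exact (Finset.mem_filter.mp ((T.filter _).max'_mem h)).2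

lemma TA_insert (b : Fin n) (A : Finset (Fin n)) :
    TA (insert b A) = insert b.succ (TA A) := by
  rw [TA, TA, Finset.map_insert, Finset.insert_comm]
  rfl

lemma nxt_congr {T S : Finset (Fin (n + 1))} {i j : Fin (n + 1)}
    (h : T.filter (fun k => i < k) = S.filter (fun k => j < k)) : nxt T i = nxt S j := by
  by_cases hne : (T.filter (fun k => i < k)).Nonempty
  · have hne' : (S.filter (fun k => j < k)).Nonempty := h ▸ hne
    rw [nxt, dif_pos hne, nxt, dif_pos hne']
    congr 1
  · have hne' : ¬ (S.filter (fun k => j < k)).Nonempty := h ▸ hne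
    rw [nxt, dif_neg hne, nxt, dif_neg hne']

lemma insert_cyc_swap {T : Finset (Fin (n + 1))} (h0 : (0 : Fin (n+1)) ∈ T) {b' : Fin (n + 1)}
    (hb' : b' ∉ T) (hb0 : b' ≠ 0) (i : Fin (n + 1)) :
    cyc (insert b' T) (Finset.mem_insert_of_mem h0) i =
      cyc T h0 (Equiv.swap (prv T h0 b') b' i) := by
  set p := prv T h0 b' with hp
  have hbelow : (T.filter (fun j => j < b')).Nonempty :=
    ⟨0, Finset.mem_filter.mpr ⟨h0, Fin.pos_iff_ne_zero.mpr hb0⟩⟩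
  have hpb : p < b' := prv_lt_of_nonempty h0 hbelow
  have hpT : p ∈ T := prv_mem h0 _
  have hS0 : (0 : Fin (n+1)) ∈ insert b' T := Finset.mem_insert_of_mem h0
  have hbS : b' ∈ insert b' T := Finset.mem_insert_self _ _
  have hpS : p ∈ insert b' T := Finset.mem_insert_of_mem hpT
  have habove : ∀ j ∈ T, p < j → b' < j := by
    intro j hj hpj
    rcases lt_trichotomy j b' with h' | h' | h'
    · exact absurd hpj (not_lt.mpr (le_prv h0 hj h'))
    · exact absurd (h' ▸ hj) hb'
    · exact h'
  by_cases hip : i = p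
  · subst hip
    rw [Equiv.swap_apply_left, cyc_apply_not_mem h0 hb', cyc_apply_mem _ hpS]
    have hle : nxt (insert b' T) p ≤ b' := nxt_le hbS hpb
    have hlt : p < nxt (insert b' T) p :=
      lt_nxt_of_nonempty ⟨b', Finset.mem_filter.mpr ⟨hbS, hpb⟩⟩
    have hmem : nxt (insert b' T) p ∈ insert b' T := nxt_mem hS0 p
    rcases Finset.mem_insert.mp hmem with h' | h'
    · exact h'
    · exact absurd (habove _ h' hlt) (not_lt.mpr hle)
  by_cases hib : i = b'
  · subst hib
    rw [Equiv.swap_apply_right, cyc_apply_mem h0 hpT, cyc_apply_mem _ hbS]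
    apply nxt_congr
    ext j
    rw [Finset.mem_filter, Finset.mem_filter, Finset.mem_insert]
    constructor
    · rintro ⟨hj1 | hj1, hj2⟩
      · rw [hj1] at hj2
        exact absurd hj2 (lt_irrefl _)
      · exact ⟨hj1, lt_trans hpb hj2⟩
    · rintro ⟨hj1, hj2⟩
      exact ⟨Or.inr hj1, habove j hj1 hj2⟩
  · rw [Equiv.swap_apply_of_ne_of_ne hip hib]
    by_cases hiT : i ∈ T
    · have hiS : i ∈ insert b' T := Finset.mem_insert_of_mem hiT
      rw [cyc_apply_mem h0 hiT, cyc_apply_mem _ hiS]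
      by_cases hibs : i < b'
      · have hile : i ≤ p := le_prv h0 hiT hibs
        have hilt : i < p := lt_of_le_of_ne hile hip
        have hne1 : (T.filter (fun k => i < k)).Nonempty :=
          ⟨p, Finset.mem_filter.mpr ⟨hpT, hilt⟩⟩
        apply le_antisymm
        · exact nxt_le (Finset.mem_insert_of_mem (nxt_mem h0 i)) (lt_nxt_of_nonempty hne1)
        · have hne2 : ((insert b' T).filter (fun k => i < k)).Nonempty :=
            ⟨p, Finset.mem_filter.mpr ⟨hpS, hilt⟩⟩
          have hgt : i < nxt (insert b' T) i := lt_nxt_of_nonempty hne2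
          rcases Finset.mem_insert.mp (nxt_mem hS0 i) with h' | h'
          · exfalso
            have hle1 : nxt (insert b' T) i ≤ p := nxt_le hpS hilt
            rw [h'] at hle1
            exact absurd hpb (not_lt.mpr hle1)
          · exact nxt_le h' hgt
      · apply nxt_congr
        ext j
        rw [Finset.mem_filter, Finset.mem_filter, Finset.mem_insert]
        constructor
        · rintro ⟨hj1 | hj1, hj2⟩
          · rw [hj1] at hj2
            exact absurd hj2 hibs
          · exact ⟨hj1, hj2⟩
        · rintro ⟨hj1, hj2⟩
          exact ⟨Or.inr hj1, hj2⟩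
    · have hiS : i ∉ insert b' T := by
        rw [Finset.mem_insert]
        rintro (h' | h')
        · exact hib h'
        · exact hiT h'
      rw [cyc_apply_not_mem h0 hiT, cyc_apply_not_mem _ hiS]

section InsertStep

variable {A : Finset (Fin n)} {b : Fin n}

lemma insert_zf_eq (hb : b ∉ A) :
    zf (insert b A) =
      zf A * Equiv.swap (prv (TA A) (zero_mem_TA A) b.succ) b.succ := by
  have hb' : b.succ ∉ TA A := fun hh => hb (succ_mem_TA.mp hh)
  have hT' : TA (insert b A) = insert b.succ (TA A) := TA_insert b A
  have key : ∀ i : Fin (n + 1), cyc (TA (insert b A)) (zero_mem_TA _) i =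
      cyc (insert b.succ (TA A)) (Finset.mem_insert_of_mem (zero_mem_TA A)) i := by
    intro i
    show (if i ∈ TA (insert b A) then nxt (TA (insert b A)) i else i) = _
    rw [hT']
    rfl
  apply Equiv.ext
  intro i
  rw [zf_apply, key i, insert_cyc_swap (zero_mem_TA A) hb' (Fin.succ_ne_zero b) i]
  rfl

lemma insert_zf_lt (hb : b ∉ A) :
    zf A (prv (TA A) (zero_mem_TA A) b.succ) < zf A b.succ := by
  set p := prv (TA A) (zero_mem_TA A) b.succ with hp
  have hb' : b.succ ∉ TA A := fun hh => hb (succ_mem_TA.mp hh)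
  have hbelow : ((TA A).filter (fun j => j < b.succ)).Nonempty :=
    ⟨0, Finset.mem_filter.mpr ⟨zero_mem_TA A, Fin.succ_pos b⟩⟩
  have hpb : p < b.succ := prv_lt_of_nonempty _ hbelow
  have hpT : p ∈ TA A := prv_mem _ _
  have hbs0 : b.succ ≠ 0 := Fin.succ_ne_zero b
  have hbsv : (b.succ : ℕ) ≤ n := by
    have : (b : ℕ) < n := b.isLt
    simp only [Fin.val_succ]
    omega
  rw [zf_apply_not_mem hb', zf_apply_mem hpT, Fin.lt_def, negval hbs0]
  by_cases hne : ((TA A).filter (fun j => p < j)).Nonempty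
  · have hlt : p < nxt (TA A) p := lt_nxt_of_nonempty hne
    have hmem : nxt (TA A) p ∈ TA A := nxt_mem (zero_mem_TA A) p
    have hgt : b.succ < nxt (TA A) p := by
      rcases lt_trichotomy (nxt (TA A) p) b.succ with h' | h' | h'
      · exact absurd hlt (not_lt.mpr (le_prv _ hmem h'))
      · exact absurd (h' ▸ hmem) hb'
      · exact h'
    have hn0 : nxt (TA A) p ≠ 0 := by
      intro hh
      rw [hh] at hgt
      exact absurd hgt (Fin.not_lt_zero _)
    rw [negval hn0]
    have h1 : (b.succ : ℕ) < (nxt (TA A) p : ℕ) := hgt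
    omega
  · rw [nxt_eq_zero_of_empty hne, neg_zero]
    simp only [Fin.val_zero]
    omega

lemma insert_brel (hb : b ∉ A) : brel (zf A) (zf (insert b A)) := by
  rw [insert_zf_eq hb]
  apply brel_of_swap
  · exact prv_lt_of_nonempty _ ⟨0, Finset.mem_filter.mpr ⟨zero_mem_TA A, Fin.succ_pos b⟩⟩
  · exact insert_zf_lt hb

end InsertStep

lemma le_of_subset {A B : Finset (Fin n)} (h : A ⊆ B) : BruhatLE (zf A) (zf B) := by
  rw [bruhatLE_eq]
  generalize hk : (B \ A).card = k
  induction k generalizing A with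
  | zero =>
      have h1 : B \ A = ∅ := Finset.card_eq_zero.mp hk
      have h2 : B ⊆ A := Finset.sdiff_eq_empty_iff_subset.mp h1
      rw [Finset.Subset.antisymm h h2]
  | succ k ih =>
      have hne : (B \ A).Nonempty := by
        rw [← Finset.card_pos, hk]
        omega
      obtain ⟨b, hb⟩ := hne
      rw [Finset.mem_sdiff] at hb
      have hstep := insert_brel hb.2
      have hsub : insert b A ⊆ B := Finset.insert_subset hb.1 h
      have hcard : (B \ insert b A).card = k := by
        rw [Finset.sdiff_insert, Finset.card_erase_of_mem (Finset.mem_sdiff.mpr hb), hk]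
        omega
      exact Relation.ReflTransGen.head hstep (ih hsub hcard)

lemma zf_empty_apply (i : Fin (n + 1)) : zf (∅ : Finset (Fin n)) i = -i := by
  have hT : TA (∅ : Finset (Fin n)) = {0} := by
    rw [TA, Finset.map_empty]
    rfl
  by_cases hi : i = 0
  · subst hi
    have hmem : (0 : Fin (n + 1)) ∈ TA (∅ : Finset (Fin n)) := zero_mem_TA _
    rw [zf_apply_mem hmem, nxt_eq_zero_of_empty]
    rw [hT]
    rintro ⟨j, hj⟩
    rw [Finset.mem_filter, Finset.mem_singleton] at hj
    rw [hj.1] at hj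
    exact absurd hj.2 (lt_irrefl _)
  · apply zf_apply_not_mem
    rw [hT, Finset.mem_singleton]
    exact hi

lemma TA_univ : TA (Finset.univ : Finset (Fin n)) = Finset.univ := by
  apply Finset.eq_univ_iff_forall.mpr
  intro i
  induction i using Fin.cases with
  | zero => exact zero_mem_TA _
  | succ a => exact succ_mem_TA.mpr (Finset.mem_univ a)

lemma zf_univ_apply (i : Fin (n + 1)) :
    ((zf (Finset.univ : Finset (Fin n)) i : Fin (n + 1)) : ℕ) = n - (i : ℕ) := by
  have hmem : i ∈ TA (Finset.univ : Finset (Fin n)) := by rw [TA_univ]; exact Finset.mem_univ i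
  rw [zf_apply_mem hmem]
  by_cases hlt : (i : ℕ) < n
  · set e : Fin (n + 1) := ⟨(i : ℕ) + 1, by omega⟩ with he
    have hie : i < e := by rw [Fin.lt_def]; simp [he]
    have heT : e ∈ TA (Finset.univ : Finset (Fin n)) := by rw [TA_univ]; exact Finset.mem_univ e
    have h1 : nxt (TA (Finset.univ : Finset (Fin n))) i ≤ e := nxt_le heT hie
    have h2 : i < nxt (TA (Finset.univ : Finset (Fin n))) i :=
      lt_nxt_of_nonempty ⟨e, Finset.mem_filter.mpr ⟨heT, hie⟩⟩
    have h3 : nxt (TA (Finset.univ : Finset (Fin n))) i = e := by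
      apply le_antisymm h1
      rw [Fin.le_def, Fin.lt_def] at *
      simp only [he]
      omega
    rw [h3]
    have he0 : e ≠ 0 := by
      intro hh
      have := congrArg Fin.val hh
      simp [he] at this
    rw [negval he0]
    simp [he]
  · have hin : (i : ℕ) = n := by have := i.isLt; omega
    rw [nxt_eq_zero_of_empty]
    · rw [neg_zero]
      simp only [Fin.val_zero]
      omega
    · rintro ⟨j, hj⟩
      rw [Finset.mem_filter] at hj
      have h1 : (i : ℕ) < (j : ℕ) := hj.2
      have := j.isLt
      omega

end BIAux

/-- for `x = (0, n, n-1, …, 2, 1) ∈ S_{n+1}` and `w₀` the longest element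
(`w₀(i) = n - i`), the Bruhat interval `[x, w₀]` is isomorphic as a poset to the Boolean
lattice of subsets of an `n`-element set. -/
theorem interval_to_longest_is_boolean (n : ℕ) (x w₀ : Equiv.Perm (Fin (n + 1)))
    (hx0 : x 0 = 0) (hx : ∀ i : Fin (n + 1), i ≠ 0 → (x i : ℕ) = n + 1 - (i : ℕ))
    (hw₀ : ∀ i : Fin (n + 1), (w₀ i : ℕ) = n - (i : ℕ)) :
    ∃ e : Finset (Fin n) ≃ {z : Equiv.Perm (Fin (n + 1)) // BruhatLE x z ∧ BruhatLE z w₀},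
      ∀ A B : Finset (Fin n), A ⊆ B ↔ BruhatLE (e A : Equiv.Perm (Fin (n + 1))) (e B) := by
  classical
  have hxeq : x = BIAux.zf (∅ : Finset (Fin n)) := by
    apply Equiv.ext
    intro i
    rw [BIAux.zf_empty_apply]
    by_cases hi : i = 0
    · rw [hi, hx0, neg_zero]
    · apply Fin.ext
      rw [hx i hi, BIAux.negval hi]
  have hweq : w₀ = BIAux.zf (Finset.univ : Finset (Fin n)) := by
    apply Equiv.ext
    intro i
    apply Fin.ext
    rw [hw₀ i, BIAux.zf_univ_apply]
  refine ⟨⟨fun A => ⟨BIAux.zf A,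
      by rw [hxeq]; exact BIAux.le_of_subset (Finset.empty_subset A),
      by rw [hweq]; exact BIAux.le_of_subset (Finset.subset_univ A)⟩,
    fun z => BIAux.Aof z.val,
    fun A => BIAux.Aof_zf A,
    ?_⟩, ?_⟩
  · rintro ⟨z, hz1, hz2⟩
    apply Subtype.ext
    rw [hxeq] at hz1
    exact BIAux.class_eq (BIAux.bruhat_preserve hz1 (BIAux.Qz_zf _)).1
  · intro A B
    constructor
    · intro h
      exact BIAux.le_of_subset h
    · intro h a ha
      have key := (BIAux.bruhat_preserve h (BIAux.Qz_zf A)).2 a.succ (Fin.succ_ne_zero a)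
        (BIAux.zf_succ_ne_iff.mpr ha)
      exact BIAux.zf_succ_ne_iff.mp key
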